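/- arXiv:1702.04768 — 5 statements merged into one kernel-verified Lean document; each statement's English description precedes it below -/
import Mathlib

section
/- Let r ≥ 1, let J denote the standard 2r×2r symplectic form matrix J = fromBlocks 0 I (−I) 0 over ℝ, let M : ℝ → Matrix (Fin r) (Fin r) ℝ satisfy (M t)ᵀ = M t for all t, and set A t = fromBlocks 0 I (−M t) 0. If Φ : ℝ → Matrix (Fin (2r)) (Fin (2r)) ℝ satisfies Φ 0 = 1 and, entrywise, Φ has derivative (A t) * (Φ t) at every t ∈ ℝ, then for all t ∈ ℝ the fundamental matrix is symplectic: (Φ t)ᵀ * J * (Φ t) = J. -/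
open Matrix

private lemma entry_eq {r : ℕ} (J X Y : Matrix (Fin r ⊕ Fin r) (Fin r ⊕ Fin r) ℝ)
    (i j : Fin r ⊕ Fin r) :
    (Xᵀ * J * Y) i j = ∑ k, ∑ l, X k i * J k l * Y l j := by
  simp only [Matrix.mul_apply, Matrix.transpose_apply, Finset.sum_mul]
  rw [Finset.sum_comm]

/-- The fundamental matrix solution of `z' = A(t) z` with
`A(t) = fromBlocks 0 I (-M t) 0`, `M t` symmetric, is symplectic. -/
theorem fundamental_matrix_symplectic
    (r : ℕ) (hr : 1 ≤ r)
    (J : Matrix (Fin r ⊕ Fin r) (Fin r ⊕ Fin r) ℝ)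
    (hJ : J = Matrix.fromBlocks 0 1 (-1) 0)
    (M : ℝ → Matrix (Fin r) (Fin r) ℝ)
    (hM : ∀ t, (M t)ᵀ = M t)
    (A : ℝ → Matrix (Fin r ⊕ Fin r) (Fin r ⊕ Fin r) ℝ)
    (hA : ∀ t, A t = Matrix.fromBlocks 0 1 (-(M t)) 0)
    (Φ : ℝ → Matrix (Fin r ⊕ Fin r) (Fin r ⊕ Fin r) ℝ)
    (hΦ0 : Φ 0 = 1)
    (hΦ : ∀ t i j, HasDerivAt (fun s => Φ s i j) ((A t * Φ t) i j) t) :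
    ∀ t : ℝ, (Φ t)ᵀ * J * Φ t = J := by
  -- Hamiltonian identity: Aᵀ J + J A = 0
  have hham : ∀ t, (A t)ᵀ * J + J * A t = 0 := by
    intro t
    rw [hA, hJ]
    simp [Matrix.fromBlocks_transpose, Matrix.fromBlocks_multiply,
      Matrix.fromBlocks_add, hM, Matrix.transpose_neg]
  -- each entry of ΦᵀJΦ has derivative 0 everywhere
  have hderiv : ∀ (i j) (t : ℝ),
      HasDerivAt (fun s => ((Φ s)ᵀ * J * Φ s) i j) 0 t := by
    intro i j t
    have h1 : HasDerivAt (fun s => ∑ k, ∑ l, Φ s k i * J k l * Φ s l j)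
        (∑ k, ∑ l, ((A t * Φ t) k i * J k l * Φ t l j
          + Φ t k i * J k l * (A t * Φ t) l j)) t := by
      apply HasDerivAt.fun_sum
      intro k _
      apply HasDerivAt.fun_sum
      intro l _
      exact ((hΦ t k i).mul_const (J k l)).mul (hΦ t l j)
    have h2 : (∑ k, ∑ l, ((A t * Φ t) k i * J k l * Φ t l j
          + Φ t k i * J k l * (A t * Φ t) l j))
        = ((A t * Φ t)ᵀ * J * Φ t + (Φ t)ᵀ * J * (A t * Φ t)) i j := by
      rw [Matrix.add_apply, entry_eq, entry_eq, ← Finset.sum_add_distrib]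
      refine Finset.sum_congr rfl fun k _ => ?_
      exact Finset.sum_add_distrib
    have h3 : (A t * Φ t)ᵀ * J * Φ t + (Φ t)ᵀ * J * (A t * Φ t) = 0 := by
      have : (A t * Φ t)ᵀ * J * Φ t + (Φ t)ᵀ * J * (A t * Φ t)
          = (Φ t)ᵀ * ((A t)ᵀ * J + J * A t) * Φ t := by
        simp [Matrix.transpose_mul, Matrix.mul_add, Matrix.add_mul, Matrix.mul_assoc]
      rw [this, hham]
      simp
    have h4 : ∀ s : ℝ, ((Φ s)ᵀ * J * Φ s) i j
        = ∑ k, ∑ l, Φ s k i * J k l * Φ s l j := fun s => entry_eq J (Φ s) (Φ s) i j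
    simp only [h4]
    rw [h2, h3] at h1
    simpa using h1
  intro t
  ext i j
  have hconst : ∀ x y : ℝ, ((Φ x)ᵀ * J * Φ x) i j = ((Φ y)ᵀ * J * Φ y) i j := by
    apply is_const_of_deriv_eq_zero
    · exact fun x => (hderiv i j x).differentiableAt
    · exact fun x => (hderiv i j x).deriv
  have := hconst t 0
  rw [hΦ0] at this
  simpa using this
end

section
/- Let r ≥ 1 and let C be any real r×r matrix. Then the exponential of the 2r×2r block matrix N = fromBlocks 0 I C 0 is given by exp N = fromBlocks E O (C*O) E, where E = Σ'_{k≥0} (1/(2k)!) • C^k and O = Σ'_{k≥0} (1/(2k+1)!) • C^k (both series converging in the matrix Banach algebra). Equivalently, formally, exp N = fromBlocks (cosh √C) ((√C)⁻¹ sinh √C) (√C sinh √C) (cosh √C). -/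
open Matrix

section Aux

variable {r : ℕ}

/-- `fromBlocks` as an additive monoid hom in four arguments (bundled on quadruples). -/
noncomputable def fromBlocksHom (r : ℕ) :
    (Matrix (Fin r) (Fin r) ℝ × Matrix (Fin r) (Fin r) ℝ ×
      Matrix (Fin r) (Fin r) ℝ × Matrix (Fin r) (Fin r) ℝ) →+
      Matrix (Fin r ⊕ Fin r) (Fin r ⊕ Fin r) ℝ where
  toFun p := Matrix.fromBlocks p.1 p.2.1 p.2.2.1 p.2.2.2
  map_zero' := by simp
  map_add' p q := by simp [Matrix.fromBlocks_add]

lemma continuous_fromBlocksHom (r : ℕ) : Continuous (fromBlocksHom r) := by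
  apply continuous_matrix
  rintro (i | i) (j | j) <;>
    simp only [fromBlocksHom, AddMonoidHom.coe_mk, ZeroHom.coe_mk,
      Matrix.fromBlocks_apply₁₁, Matrix.fromBlocks_apply₁₂,
      Matrix.fromBlocks_apply₂₁, Matrix.fromBlocks_apply₂₂] <;>
    fun_prop

lemma tsum_fromBlocks (A B C D : ℕ → Matrix (Fin r) (Fin r) ℝ)
    (hA : Summable A) (hB : Summable B) (hC : Summable C) (hD : Summable D) :
    ∑' k, Matrix.fromBlocks (A k) (B k) (C k) (D k) =
      Matrix.fromBlocks (∑' k, A k) (∑' k, B k) (∑' k, C k) (∑' k, D k) := by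
  have h : HasSum (fun k => (A k, B k, C k, D k))
      (∑' k, A k, ∑' k, B k, ∑' k, C k, ∑' k, D k) :=
    (hA.hasSum.prodMk (hB.hasSum.prodMk (hC.hasSum.prodMk hD.hasSum)))
  have := (h.map (fromBlocksHom r) (continuous_fromBlocksHom r)).tsum_eq
  simpa [fromBlocksHom] using this

end Aux

set_option maxHeartbeats 2000000 in
/-- The exponential of `fromBlocks 0 I C 0` is
`fromBlocks E O (C*O) E` where `E` and `O` are the even and odd series in `C`,
the matrix analogues of `cosh √C` and `(√C)⁻¹ sinh √C`. -/
theorem exp_fromBlocks_zero_one_C_zero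
    (r : ℕ) (hr : 1 ≤ r)
    (C : Matrix (Fin r) (Fin r) ℝ)
    (E O : Matrix (Fin r) (Fin r) ℝ)
    (hE : E = ∑' k : ℕ, (((2 * k).factorial : ℝ)⁻¹) • C ^ k)
    (hO : O = ∑' k : ℕ, (((2 * k + 1).factorial : ℝ)⁻¹) • C ^ k) :
    NormedSpace.exp (Matrix.fromBlocks 0 1 C 0) =
      Matrix.fromBlocks E O (C * O) E := by
  letI : SeminormedRing (Matrix (Fin r ⊕ Fin r) (Fin r ⊕ Fin r) ℝ) :=
    Matrix.linftyOpSemiNormedRing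
  letI : NormedRing (Matrix (Fin r ⊕ Fin r) (Fin r ⊕ Fin r) ℝ) :=
    Matrix.linftyOpNormedRing
  letI : NormedAlgebra ℝ (Matrix (Fin r ⊕ Fin r) (Fin r ⊕ Fin r) ℝ) :=
    Matrix.linftyOpNormedAlgebra
  letI : SeminormedRing (Matrix (Fin r) (Fin r) ℝ) := Matrix.linftyOpSemiNormedRing
  letI : NormedRing (Matrix (Fin r) (Fin r) ℝ) := Matrix.linftyOpNormedRing
  letI : NormedAlgebra ℝ (Matrix (Fin r) (Fin r) ℝ) := Matrix.linftyOpNormedAlgebra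
  set N : Matrix (Fin r ⊕ Fin r) (Fin r ⊕ Fin r) ℝ := Matrix.fromBlocks 0 1 C 0 with hN
  -- powers of N
  have hpow_even : ∀ k : ℕ, N ^ (2 * k) = Matrix.fromBlocks (C ^ k) 0 0 (C ^ k) := by
    intro k
    induction k with
    | zero => simp [Matrix.fromBlocks_one]
    | succ k ih =>
      have : 2 * (k + 1) = 2 * k + 1 + 1 := by ring
      rw [this, pow_succ, pow_succ, ih, hN, Matrix.fromBlocks_multiply,
        Matrix.fromBlocks_multiply]
      simp [pow_succ]
  have hpow_odd : ∀ k : ℕ, N ^ (2 * k + 1) =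
      Matrix.fromBlocks 0 (C ^ k) (C ^ (k + 1)) 0 := by
    intro k
    rw [pow_succ, hpow_even, hN, Matrix.fromBlocks_multiply]
    simp [pow_succ]
  -- summability of the exponential series
  have hNsum : Summable fun n : ℕ => ((n.factorial : ℝ)⁻¹) • N ^ n :=
    NormedSpace.expSeries_summable' (𝕂 := ℝ) N
  have h2inj : Function.Injective fun k : ℕ => 2 * k := fun a b h => by
    dsimp at h; omega
  have h2inj' : Function.Injective fun k : ℕ => 2 * k + 1 := fun a b h => by
    dsimp at h; omega
  have hesum : Summable fun k : ℕ => (((2 * k).factorial : ℝ)⁻¹) • N ^ (2 * k) :=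
    hNsum.comp_injective h2inj
  have hosum : Summable fun k : ℕ => (((2 * k + 1).factorial : ℝ)⁻¹) • N ^ (2 * k + 1) :=
    hNsum.comp_injective h2inj'
  -- summability of the small even/odd series
  have hCsum : Summable fun k : ℕ => ((k.factorial : ℝ)⁻¹) * ‖C‖ ^ k := by
    simpa [div_eq_inv_mul] using Real.summable_pow_div_factorial ‖C‖
  haveI : Nonempty (Fin r) := ⟨⟨0, hr⟩⟩
  haveI : NormOneClass (Matrix (Fin r) (Fin r) ℝ) := Matrix.linfty_opNormOneClass
  have key : ∀ m : ℕ → ℕ, (∀ k, k ≤ m k) →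
      Summable fun k : ℕ => (((m k).factorial : ℝ)⁻¹) • C ^ k := by
    intro m hm
    refine Summable.of_norm_bounded hCsum fun k => ?_
    rw [norm_smul]
    have h1 : ((m k).factorial : ℝ)⁻¹ ≤ (k.factorial : ℝ)⁻¹ := by
      apply inv_anti₀
      · exact_mod_cast k.factorial_pos
      · exact_mod_cast Nat.factorial_le (hm k)
    have h2 : ‖C ^ k‖ ≤ ‖C‖ ^ k := norm_pow_le C k
    have h3 : ‖(((m k).factorial : ℝ)⁻¹)‖ ≤ (k.factorial : ℝ)⁻¹ := by
      rw [Real.norm_eq_abs, abs_of_nonneg (by positivity)]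
      exact h1
    exact mul_le_mul h3 h2 (norm_nonneg _) (by positivity)
  have hEsum : Summable fun k : ℕ => (((2 * k).factorial : ℝ)⁻¹) • C ^ k :=
    key (fun k => 2 * k) (fun k => by omega)
  have hOsum : Summable fun k : ℕ => (((2 * k + 1).factorial : ℝ)⁻¹) • C ^ k :=
    key (fun k => 2 * k + 1) (fun k => by omega)
  have hOsum' : Summable fun k : ℕ => (((2 * k + 1).factorial : ℝ)⁻¹) • C ^ (k + 1) := by
    have := (hOsum.mul_left C)
    simp only [Matrix.mul_smul, ← pow_succ'] at this
    exact this
  -- split the exponential series into even and odd parts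
  rw [NormedSpace.exp_eq_tsum (𝕂 := ℝ)]
  beta_reduce
  rw [← tsum_even_add_odd hesum hosum]
  -- rewrite each part in block form
  have heven : (∑' k : ℕ, (((2 * k).factorial : ℝ)⁻¹) • N ^ (2 * k)) =
      Matrix.fromBlocks E 0 0 E := by
    have : ∀ k : ℕ, (((2 * k).factorial : ℝ)⁻¹) • N ^ (2 * k) =
        Matrix.fromBlocks ((((2 * k).factorial : ℝ)⁻¹) • C ^ k) 0 0
          ((((2 * k).factorial : ℝ)⁻¹) • C ^ k) := by
      intro k
      rw [hpow_even k, Matrix.fromBlocks_smul, smul_zero]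
    rw [tsum_congr this, tsum_fromBlocks _ _ _ _ hEsum summable_zero summable_zero hEsum]
    simp [hE]
  have hodd : (∑' k : ℕ, (((2 * k + 1).factorial : ℝ)⁻¹) • N ^ (2 * k + 1)) =
      Matrix.fromBlocks 0 O (C * O) 0 := by
    have : ∀ k : ℕ, (((2 * k + 1).factorial : ℝ)⁻¹) • N ^ (2 * k + 1) =
        Matrix.fromBlocks 0 ((((2 * k + 1).factorial : ℝ)⁻¹) • C ^ k)
          ((((2 * k + 1).factorial : ℝ)⁻¹) • C ^ (k + 1)) 0 := by
      intro k
      rw [hpow_odd k, Matrix.fromBlocks_smul, smul_zero]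
    rw [tsum_congr this, tsum_fromBlocks _ _ _ _ summable_zero hOsum hOsum' summable_zero]
    have hCO : (∑' k : ℕ, (((2 * k + 1).factorial : ℝ)⁻¹) • C ^ (k + 1)) = C * O := by
      have : ∀ k : ℕ, (((2 * k + 1).factorial : ℝ)⁻¹) • C ^ (k + 1) =
          C * ((((2 * k + 1).factorial : ℝ)⁻¹) • C ^ k) := by
        intro k
        rw [pow_succ', Matrix.mul_smul]
      rw [tsum_congr this, hOsum.tsum_mul_left C, hO]
    simp [hO, hCO]
  rw [heven, hodd, Matrix.fromBlocks_add]
  simp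
end

section
/- Let ω > 0 and h ∈ ℝ, and set q = sinh(hω)/ω and rₕ = ω · tanh(hω/2). Then the exact flow matrix factorizes into three shears: !![cosh(hω), sinh(hω)/ω; ω·sinh(hω), cosh(hω)] = !![1, 0; rₕ, 1] * !![1, q; 0, 1] * !![1, 0; rₕ, 1]. -/
open Matrix

/-- Three-shear factorization of the hyperbolic flow matrix. -/
theorem shear_factorization_hyperbolic (ω h : ℝ) (hω : 0 < ω)
    (q rh : ℝ)
    (hq : q = Real.sinh (h * ω) / ω)
    (hr : rh = ω * Real.tanh (h * ω / 2)) :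
    !![Real.cosh (h * ω), Real.sinh (h * ω) / ω;
       ω * Real.sinh (h * ω), Real.cosh (h * ω)] =
      !![(1:ℝ), 0; rh, 1] * !![(1:ℝ), q; 0, 1] * !![(1:ℝ), 0; rh, 1] := by
  have hs : Real.sinh (h * ω) = 2 * Real.sinh (h * ω / 2) * Real.cosh (h * ω / 2) := by
    rw [show h * ω = 2 * (h * ω / 2) by ring, Real.sinh_two_mul,
      show (2:ℝ) * (h * ω / 2) / 2 = h * ω / 2 by ring]
  have hcc : Real.cosh (h * ω) =
      Real.cosh (h * ω / 2) ^ 2 + Real.sinh (h * ω / 2) ^ 2 := by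
    rw [show h * ω = 2 * (h * ω / 2) by ring, Real.cosh_two_mul,
      show (2:ℝ) * (h * ω / 2) / 2 = h * ω / 2 by ring]
  have hc : Real.cosh (h * ω / 2) ≠ 0 := (Real.cosh_pos (h * ω / 2)).ne'
  have hpy := Real.cosh_sq_sub_sinh_sq (h * ω / 2)
  have hω' : ω ≠ 0 := ne_of_gt hω
  subst hq hr
  rw [Real.tanh_eq_sinh_div_cosh, hs, hcc]
  ext i j
  fin_cases i <;> fin_cases j <;>
      simp [Matrix.mul_apply, Fin.sum_univ_succ] <;> field_simp
  · linear_combination hpy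
  · linear_combination (2 * Real.sinh (ω * h / 2)) * Real.cosh_sq_sub_sinh_sq (ω * h / 2)
  · linear_combination hpy
end

section
/- Let ω > 0 and h ∈ ℝ satisfy |h|·ω < π, and set q = sin(hω)/ω and rₕ = −ω · tan(hω/2). Then the exact flow matrix factorizes into three shears: !![cos(hω), sin(hω)/ω; −ω·sin(hω), cos(hω)] = !![1, 0; rₕ, 1] * !![1, q; 0, 1] * !![1, 0; rₕ, 1]. -/
open Matrix

/-- Three-shear factorization of the harmonic-oscillator flow matrix,
valid when `|h| ω < π`. -/
theorem shear_factorization_trigonometric (ω h : ℝ) (hω : 0 < ω)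
    (hcond : |h| * ω < Real.pi)
    (q rh : ℝ)
    (hq : q = Real.sin (h * ω) / ω)
    (hr : rh = -(ω * Real.tan (h * ω / 2))) :
    !![Real.cos (h * ω), Real.sin (h * ω) / ω;
       -(ω * Real.sin (h * ω)), Real.cos (h * ω)] =
      !![(1:ℝ), 0; rh, 1] * !![(1:ℝ), q; 0, 1] * !![(1:ℝ), 0; rh, 1] := by
  have hc : Real.cos (h * ω / 2) ≠ 0 := by
    have habs : |h * ω / 2| < Real.pi / 2 := by
      rw [abs_div, abs_mul, abs_of_pos hω, abs_two]
      linarith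
    obtain ⟨h1, h2⟩ := abs_lt.mp habs
    exact (Real.cos_pos_of_mem_Ioo ⟨h1, h2⟩).ne'
  have hs2 : Real.sin (h * ω) = 2 * Real.sin (h * ω / 2) * Real.cos (h * ω / 2) := by
    rw [← Real.sin_two_mul]; congr 1; ring
  have hc2 : Real.cos (h * ω) = Real.cos (h * ω / 2) ^ 2 - Real.sin (h * ω / 2) ^ 2 := by
    have := Real.cos_two_mul' (h * ω / 2)
    rw [show 2 * (h * ω / 2) = h * ω by ring] at this
    exact this
  have hpyth := Real.sin_sq_add_cos_sq (h * ω / 2)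
  subst hq hr
  rw [Real.tan_eq_sin_div_cos]
  ext i j
  fin_cases i <;> fin_cases j <;>
      simp [Matrix.mul_apply, Fin.sum_univ_succ, hs2, hc2] <;>
      field_simp
  · linear_combination hpyth
  · rw [mul_comm ω h]; field_simp; linear_combination (-2 * Real.sin (h * ω / 2)) * hpyth
  · linear_combination hpyth
end

section
/- Let r ≥ 1, let C be a real symmetric positive definite r×r matrix with positive definite square root √C, let h ∈ ℝ, and define matrix hyperbolic functions by cosh X = (exp X + exp(−X))/2 and sinh X = (exp X − exp(−X))/2. Set S = h • √C, Q = (√C)⁻¹ * sinh S, and R = √C * sinh(S/2) * (cosh(S/2))⁻¹ (note cosh(S/2) is positive definite, hence invertible). Then fromBlocks (cosh S) Q (√C * sinh S) (cosh S) = (fromBlocks I 0 R I) * (fromBlocks I Q 0 I) * (fromBlocks I 0 R I). -/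
open Matrix

/-- Matrix hyperbolic cosine: `cosh X = (exp X + exp (-X))/2`. -/
noncomputable def mcosh {n : Type*} [Fintype n] [DecidableEq n]
    (X : Matrix n n ℝ) : Matrix n n ℝ :=
  (1 / 2 : ℝ) • (NormedSpace.exp X + NormedSpace.exp (-X))

/-- Matrix hyperbolic sine: `sinh X = (exp X - exp (-X))/2`. -/
noncomputable def msinh {n : Type*} [Fintype n] [DecidableEq n]
    (X : Matrix n n ℝ) : Matrix n n ℝ :=
  (1 / 2 : ℝ) • (NormedSpace.exp X - NormedSpace.exp (-X))

/-- `Aᴴ * A` is positive definite when `A` is invertible. -/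
lemma posDef_conjTranspose_mul_self_of_isUnit {n : Type*} [Fintype n] [DecidableEq n]
    {A : Matrix n n ℝ} (hA : IsUnit A) : (Aᴴ * A).PosDef := by
  refine Matrix.PosDef.of_dotProduct_mulVec_pos (Matrix.isHermitian_conjTranspose_mul_self _) fun x hx => ?_
  rw [← Matrix.mulVec_mulVec, dotProduct_mulVec, Matrix.vecMul_conjTranspose, star_star]
  have hAx : A *ᵥ x ≠ 0 := by
    intro hc
    exact hx (Matrix.mulVec_injective_iff_isUnit.mpr hA (by simpa using hc))
  exact dotProduct_star_self_pos_iff.mpr hAx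

/-- The matrix exponential of a real symmetric matrix is positive definite. -/
lemma posDef_exp_of_isHermitian {n : Type*} [Fintype n] [DecidableEq n]
    {M : Matrix n n ℝ} (hM : M.IsHermitian) : (NormedSpace.exp M).PosDef := by
  have hMt : Mᵀ = M := by simpa using hM.eq
  have hherm : ((1/2 : ℝ) • M).IsHermitian := by
    simp [Matrix.IsHermitian, Matrix.conjTranspose_smul, hMt]
  have hA : (NormedSpace.exp ((1/2 : ℝ) • M)).IsHermitian := hherm.exp
  have hMM : NormedSpace.exp M =
      (NormedSpace.exp ((1/2 : ℝ) • M))ᴴ * NormedSpace.exp ((1/2 : ℝ) • M) := by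
    rw [hA.eq, ← Matrix.exp_add_of_commute _ _ (Commute.refl _)]
    congr 1
    module
  rw [hMM]
  exact posDef_conjTranspose_mul_self_of_isUnit (Matrix.isUnit_exp _)

/-- If `A` commutes with `B` and `A` is invertible, then `A⁻¹` commutes with `B`. -/
lemma commute_nonsing_inv_left {n : Type*} [Fintype n] [DecidableEq n]
    {A B : Matrix n n ℝ} (h : Commute A B) (hA : IsUnit A.det) : Commute A⁻¹ B := by
  have h2 : A⁻¹ * (B * A) = B := by
    rw [← h.eq, Matrix.nonsing_inv_mul_cancel_left _ _ hA]
  show A⁻¹ * B = B * A⁻¹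
  calc A⁻¹ * B = A⁻¹ * B * A * A⁻¹ := by
        rw [Matrix.mul_nonsing_inv_cancel_right _ _ hA]
    _ = A⁻¹ * (B * A) * A⁻¹ := by rw [Matrix.mul_assoc A⁻¹ B A]
    _ = B * A⁻¹ := by rw [h2]

/-- Three-shear factorization of the exact flow
`Φ(h) = exp (h • fromBlocks 0 I C 0)` for `C` symmetric positive definite,
with `Q = sinh(h√C)/√C` and `R = √C tanh(h√C/2)`. -/
theorem shear_factorization_matrix
    (r : ℕ) (hr : 1 ≤ r)
    (C sqrtC : Matrix (Fin r) (Fin r) ℝ)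
    (hC : C.PosDef) (hsqrt : sqrtC.PosDef) (hsq : sqrtC * sqrtC = C)
    (h : ℝ)
    (S : Matrix (Fin r) (Fin r) ℝ) (hS : S = h • sqrtC)
    (Q R : Matrix (Fin r) (Fin r) ℝ)
    (hQ : Q = sqrtC⁻¹ * msinh S)
    (hR : R = sqrtC * msinh ((1/2 : ℝ) • S) * (mcosh ((1/2 : ℝ) • S))⁻¹) :
    Matrix.fromBlocks (mcosh S) Q (sqrtC * msinh S) (mcosh S) =
      Matrix.fromBlocks 1 0 R 1 * Matrix.fromBlocks 1 Q 0 1 *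
        Matrix.fromBlocks 1 0 R 1 := by
  classical
  have hsdet : IsUnit sqrtC.det := (Matrix.isUnit_iff_isUnit_det sqrtC).mp hsqrt.isUnit
  set T : Matrix (Fin r) (Fin r) ℝ := (1/2 : ℝ) • S with hT
  set e := NormedSpace.exp T with he
  set f := NormedSpace.exp (-T) with hf
  have hc_def : mcosh T = (1/2 : ℝ) • (e + f) := rfl
  have hs_def : msinh T = (1/2 : ℝ) • (e - f) := rfl
  have hef : e * f = 1 := by
    rw [he, hf, ← Matrix.exp_add_of_commute T (-T) (Commute.refl T).neg_right,
      add_neg_cancel, NormedSpace.exp_zero]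
  have hfe : f * e = 1 := by
    rw [he, hf, ← Matrix.exp_add_of_commute (-T) T (Commute.refl T).neg_left,
      neg_add_cancel, NormedSpace.exp_zero]
  have hee : e * e = NormedSpace.exp S := by
    rw [he, ← Matrix.exp_add_of_commute T T (Commute.refl T)]
    congr 1
    rw [hT]; module
  have hff : f * f = NormedSpace.exp (-S) := by
    rw [hf, ← Matrix.exp_add_of_commute (-T) (-T) (Commute.refl (-T))]
    congr 1
    rw [hT]; module
  have hcoshS : mcosh S = (1/2 : ℝ) • (e * e + f * f) := by rw [mcosh, hee, hff]
  have hsinhS : msinh S = (1/2 : ℝ) • (e * e - f * f) := by rw [msinh, hee, hff]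
  -- commutation facts
  have hsT : Commute sqrtC T := by
    rw [hT, hS, smul_smul]
    exact (Commute.refl sqrtC).smul_right _
  have hse : Commute sqrtC e := hsT.exp_right
  have hsf : Commute sqrtC f := hsT.neg_right.exp_right
  have hsc : Commute sqrtC (mcosh T) := by
    rw [hc_def]; exact (hse.add_right hsf).smul_right _
  have hssT : Commute sqrtC (msinh T) := by
    rw [hs_def]; exact (hse.sub_right hsf).smul_right _
  have hsS : Commute sqrtC (msinh S) := by
    rw [hsinhS]; exact ((hse.mul_right hse).sub_right (hsf.mul_right hsf)).smul_right _
  have hscoshS : Commute sqrtC (mcosh S) := by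
    rw [hcoshS]; exact ((hse.mul_right hse).add_right (hsf.mul_right hsf)).smul_right _
  have heff : Commute e f := ((Commute.refl T).neg_right).exp
  have heS : Commute e (msinh S) := by
    rw [hsinhS]
    exact (((Commute.refl e).mul_right (Commute.refl e)).sub_right
      (heff.mul_right heff)).smul_right _
  have hfS : Commute f (msinh S) := by
    rw [hsinhS]
    exact ((heff.symm.mul_right heff.symm).sub_right
      ((Commute.refl f).mul_right (Commute.refl f))).smul_right _
  have hcSsinhS : Commute (mcosh T) (msinh S) := by
    rw [hc_def]
    exact (heS.add_left hfS).smul_left _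
  -- invertibility of cosh
  have hsqt : sqrtCᵀ = sqrtC := by simpa using hsqrt.1.eq
  have hherm : ∀ t : ℝ, (t • sqrtC).IsHermitian := by
    intro t
    simp [Matrix.IsHermitian, Matrix.conjTranspose_smul, hsqt]
  have hE : e.PosDef := by
    rw [he, hT, hS, smul_smul]
    exact posDef_exp_of_isHermitian (hherm _)
  have hF : f.PosDef := by
    rw [hf, hT, hS, smul_smul, ← neg_smul]
    exact posDef_exp_of_isHermitian (hherm _)
  have hcdet : IsUnit (mcosh T).det := by
    rw [hc_def, Matrix.det_smul]
    exact (isUnit_iff_ne_zero.mpr (pow_ne_zero _ (by norm_num))).mul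
      (hE.add hF).det_pos.ne'.isUnit
  haveI : Invertible (mcosh T) := (mcosh T).invertibleOfIsUnitDet hcdet
  -- basic relations for R and Q
  have hRc : R * mcosh T = sqrtC * msinh T := by
    rw [hR, Matrix.nonsing_inv_mul_cancel_right _ _ hcdet]
  have hQsc : Q * (sqrtC * msinh T) = msinh S * msinh T := by
    rw [hQ, Matrix.mul_assoc, ← Matrix.mul_assoc (msinh S), ← hsS.eq,
      Matrix.mul_assoc sqrtC, Matrix.nonsing_inv_mul_cancel_left _ _ hsdet]
  have hef' : ∀ x, e * (f * x) = x := fun x => by rw [← mul_assoc, hef, one_mul]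
  have hfe' : ∀ x, f * (e * x) = x := fun x => by rw [← mul_assoc, hfe, one_mul]
  -- scalar identities in e, f
  have K1 : msinh S * msinh T = (mcosh S - 1) * mcosh T := by
    rw [hcoshS, hsinhS, hc_def, hs_def]
    simp only [smul_mul_assoc, mul_smul_comm, smul_smul, add_mul, mul_add, sub_mul, mul_sub,
      mul_assoc, hef, hfe, hef', hfe', mul_one, one_mul, smul_add, smul_sub]
    module
  have K2 : mcosh S * mcosh T = mcosh T + msinh S * msinh T := by
    rw [hcoshS, hsinhS, hc_def, hs_def]
    simp only [smul_mul_assoc, mul_smul_comm, smul_smul, add_mul, mul_add, sub_mul, mul_sub,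
      mul_assoc, hef, hfe, hef', hfe', mul_one, one_mul, smul_add, smul_sub]
    module
  have K3 : msinh S * mcosh T = msinh T + mcosh S * msinh T := by
    rw [hcoshS, hsinhS, hc_def, hs_def]
    simp only [smul_mul_assoc, mul_smul_comm, smul_smul, add_mul, mul_add, sub_mul, mul_sub,
      mul_assoc, hef, hfe, hef', hfe', mul_one, one_mul, smul_add, smul_sub]
    module
  have K1' : msinh T * msinh S = (mcosh S - 1) * mcosh T := by
    rw [hcoshS, hsinhS, hc_def, hs_def]
    simp only [smul_mul_assoc, mul_smul_comm, smul_smul, add_mul, mul_add, sub_mul, mul_sub,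
      mul_assoc, hef, hfe, hef', hfe', mul_one, one_mul, smul_add, smul_sub]
    module
  -- Q * R = cosh S - 1
  have hQR : Q * R = mcosh S - 1 := by
    apply (Matrix.mul_left_inj_of_invertible (mcosh T)).mp
    rw [Matrix.mul_assoc, hRc, hQsc, K1]
  -- R * Q = cosh S - 1
  have hcQ : Commute (mcosh T) Q := by
    rw [hQ]
    exact (commute_nonsing_inv_left hsc hsdet).symm.mul_right hcSsinhS
  have hsQ' : sqrtC * msinh T * Q = (mcosh S - 1) * mcosh T := by
    rw [hQ, hssT.eq, Matrix.mul_assoc (msinh T),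
      Matrix.mul_nonsing_inv_cancel_left _ _ hsdet, K1']
  have hRQ : R * Q = mcosh S - 1 := by
    apply (Matrix.mul_left_inj_of_invertible (mcosh T)).mp
    have hstep : R * Q * mcosh T = sqrtC * msinh T * Q := by
      rw [Matrix.mul_assoc R Q, ← hcQ.eq, ← Matrix.mul_assoc, hRc]
    rw [hstep, hsQ']
  -- block identities
  have hB1 : 1 + Q * R = mcosh S := by rw [hQR]; abel
  have hB4 : R * Q + 1 = mcosh S := by rw [hRQ]; abel
  have hB3' : R + mcosh S * R = sqrtC * msinh S := by
    apply (Matrix.mul_left_inj_of_invertible (mcosh T)).mp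
    rw [add_mul, Matrix.mul_assoc (mcosh S) R, hRc, Matrix.mul_assoc sqrtC, K3, mul_add,
      ← Matrix.mul_assoc (mcosh S), ← hscoshS.eq, Matrix.mul_assoc]
  rw [Matrix.fromBlocks_multiply, Matrix.fromBlocks_multiply]
  simp only [Matrix.one_mul, Matrix.mul_one, Matrix.mul_zero, Matrix.zero_mul, add_zero,
    zero_add, one_mul, mul_one, mul_zero, zero_mul]
  rw [hB1, hB4, hB3']
end
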